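/- Let k be an integer, let y ∈ ℝ, and let u, v : ℝ → ℂ be four times continuously differentiable functions satisfying i·k·u(t) + v′(t) = 0 for all t ∈ ℝ. Then the function h ↦ [ i·k·( u(y−h)/6 + 2u(y)/3 + u(y+h)/6 ) + ( v(y+h) − v(y−h) )/(2h) ] / h³ tends to 0 as h → 0⁺. -/

import Mathlib

open Complex Filter

open Asymptotics Set in

lemma step_littleO {f f' : ℝ → ℂ} {n : ℕ} (hd : ∀ t, HasDerivAt f (f' t) t)
    (h0 : f 0 = 0) (hs : f' =o[nhdsWithin 0 (Set.Ioi 0)] fun t => t ^ n) :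
    f =o[nhdsWithin 0 (Set.Ioi 0)] fun t => t ^ (n + 1) := by
  rw [Asymptotics.isLittleO_iff] at hs ⊢
  intro ε hε
  have hev : {t : ℝ | ‖f' t‖ ≤ ε * ‖t ^ n‖} ∈ nhdsWithin 0 (Set.Ioi 0) := hs hε
  rw [Metric.mem_nhdsWithin_iff] at hev
  obtain ⟨δ, hδ, hb⟩ := hev
  have : Metric.ball (0:ℝ) δ ∩ Ioi 0 ∈ nhdsWithin (0:ℝ) (Set.Ioi 0) :=
    inter_mem (nhdsWithin_le_nhds (Metric.ball_mem_nhds 0 hδ)) self_mem_nhdsWithin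
  filter_upwards [this] with x hx
  obtain ⟨hxδ', hx0⟩ := hx
  have hxδ : |x| < δ := by simpa [Real.dist_eq] using hxδ'
  simp only [Set.mem_Ioi] at hx0
  -- bound ‖f x - f a‖ for a ∈ Ioo 0 x
  have key : ∀ a ∈ Ioo (0:ℝ) x, ‖f x - f a‖ ≤ ε * x ^ n * ‖x - a‖ := by
    intro a ha
    refine Convex.norm_image_sub_le_of_norm_hasDerivWithin_le
      (f := f) (f' := f') (s := Icc a x) (C := ε * x ^ n)
      (fun t _ => (hd t).hasDerivWithinAt)
      (fun t ht => ?_)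
      (convex_Icc a x) (left_mem_Icc.mpr ha.2.le) (right_mem_Icc.mpr ha.2.le)
    have ht0 : 0 < t := lt_of_lt_of_le ha.1 ht.1
    have htd : |t| < δ := by
      rw [abs_of_pos ht0]; exact lt_of_le_of_lt ht.2 (lt_of_abs_lt hxδ)
    have hbt := hb ⟨by simpa [Real.dist_eq] using htd, ht0⟩
    simp only [Set.mem_setOf_eq, Real.norm_eq_abs, abs_of_pos (pow_pos ht0 n)] at hbt
    calc ‖f' t‖ ≤ ε * t ^ n := hbt
      _ ≤ ε * x ^ n := by
        gcongr
        exact ht.2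

  -- limit a → 0⁺
  have hcont : Tendsto (fun a => ‖f x - f a‖) (nhdsWithin 0 (Set.Ioi 0)) (nhds ‖f x - f 0‖) := by
    refine (Tendsto.norm ?_)
    exact (tendsto_const_nhds.sub (((hd 0).continuousAt.tendsto).mono_left nhdsWithin_le_nhds))
  have hlim : ‖f x - f 0‖ ≤ ε * x ^ n * x := by
    refine le_of_tendsto hcont ?_
    filter_upwards [Ioo_mem_nhdsGT_of_mem (Set.left_mem_Ico.mpr hx0)] with a ha
    calc ‖f x - f a‖ ≤ ε * x ^ n * ‖x - a‖ := key a ha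
      _ ≤ ε * x ^ n * x := by
        rw [Real.norm_eq_abs, abs_of_pos (by linarith [ha.1, ha.2] : (0:ℝ) < x - a)]
        have : (0:ℝ) ≤ ε * x ^ n := by positivity
        nlinarith [ha.1]
  rw [h0, sub_zero] at hlim
  calc ‖f x‖ ≤ ε * x ^ n * x := hlim
    _ = ε * ‖x ^ (n+1)‖ := by
      rw [Real.norm_eq_abs, abs_of_pos (pow_pos hx0 _), pow_succ]; ring


open Asymptotics Set in

lemma main_littleO (y : ℝ) (v w w1 w2 w3 : ℝ → ℂ)
    (hvD : ∀ t, HasDerivAt v (w t) t)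
    (hwD : ∀ t, HasDerivAt w (w1 t) t)
    (hw1D : ∀ t, HasDerivAt w1 (w2 t) t)
    (hw2D : ∀ t, HasDerivAt w2 (w3 t) t)
    (hw3c : Continuous w3) :
    (fun h : ℝ => v (y + h) - v (y - h)
        - ((h : ℂ) / 3) * (w (y + h) + 4 * w y + w (y - h)))
      =o[nhdsWithin 0 (Set.Ioi 0)] (fun h => h ^ 4) := by
  have hR : ∀ h : ℝ, HasDerivAt (fun s : ℝ => (s : ℂ)) 1 h :=
    fun h => by simpa using (hasDerivAt_id h).ofReal_comp
  have compP : ∀ {g g' : ℝ → ℂ}, (∀ t, HasDerivAt g (g' t) t) →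
      ∀ h : ℝ, HasDerivAt (fun s => g (y + s)) (g' (y + h)) h := by
    intro g g' hg h
    simpa [Function.comp_def] using (hg (y + h)).scomp h ((hasDerivAt_id' (x := h)).const_add y)
  have compM : ∀ {g g' : ℝ → ℂ}, (∀ t, HasDerivAt g (g' t) t) →
      ∀ h : ℝ, HasDerivAt (fun s => g (y - s)) (-(g' (y - h))) h := by
    intro g g' hg h
    simpa [Function.comp_def] using (hg (y - h)).scomp h ((hasDerivAt_id' (x := h)).const_sub y)
  have hG1 : ∀ h : ℝ, HasDerivAt
      (fun h : ℝ => v (y + h) - v (y - h)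
        - ((h : ℂ) / 3) * (w (y + h) + 4 * w y + w (y - h)))
      (w (y + h) + w (y - h) - (1/3 : ℂ) * (w (y + h) + 4 * w y + w (y - h))
        - ((h : ℂ) / 3) * (w1 (y + h) - w1 (y - h))) h := by
    intro h
    have hS : HasDerivAt (fun s => w (y + s) + 4 * w y + w (y - s))
        (w1 (y + h) + -(w1 (y - h))) h := ((compP hwD h).add_const _).add (compM hwD h)
    have hc : HasDerivAt (fun s : ℝ => ((s : ℂ) / 3)) (1/3) h := (hR h).div_const 3
    have := ((compP hvD h).sub (compM hvD h)).sub (hc.mul hS)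
    convert this using 1
    case e'_4 => rfl
    case e'_8 => rfl
    ring
  have hG2 : ∀ h : ℝ, HasDerivAt
      (fun h : ℝ => w (y + h) + w (y - h) - (1/3 : ℂ) * (w (y + h) + 4 * w y + w (y - h))
        - ((h : ℂ) / 3) * (w1 (y + h) - w1 (y - h)))
      ((1/3 : ℂ) * (w1 (y + h) - w1 (y - h)) - ((h : ℂ) / 3) * (w2 (y + h) + w2 (y - h))) h := by
    intro h
    have hS : HasDerivAt (fun s => w (y + s) + 4 * w y + w (y - s))
        (w1 (y + h) + -(w1 (y - h))) h := ((compP hwD h).add_const _).add (compM hwD h)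
    have hD : HasDerivAt (fun s => w1 (y + s) - w1 (y - s))
        (w2 (y + h) - -(w2 (y - h))) h := (compP hw1D h).sub (compM hw1D h)
    have hc : HasDerivAt (fun s : ℝ => ((s : ℂ) / 3)) (1/3) h := (hR h).div_const 3
    have := (((compP hwD h).add (compM hwD h)).sub (hS.const_mul (1/3 : ℂ))).sub (hc.mul hD)
    convert this using 1
    case e'_4 => rfl
    case e'_8 => rfl
    ring
  have hG3 : ∀ h : ℝ, HasDerivAt
      (fun h : ℝ => (1/3 : ℂ) * (w1 (y + h) - w1 (y - h))
        - ((h : ℂ) / 3) * (w2 (y + h) + w2 (y - h)))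
      (-((h : ℂ) / 3) * (w3 (y + h) - w3 (y - h))) h := by
    intro h
    have hD : HasDerivAt (fun s => w1 (y + s) - w1 (y - s))
        (w2 (y + h) - -(w2 (y - h))) h := (compP hw1D h).sub (compM hw1D h)
    have hE : HasDerivAt (fun s => w2 (y + s) + w2 (y - s))
        (w3 (y + h) + -(w3 (y - h))) h := (compP hw2D h).add (compM hw2D h)
    have hc : HasDerivAt (fun s : ℝ => ((s : ℂ) / 3)) (1/3) h := (hR h).div_const 3
    have := (hD.const_mul (1/3 : ℂ)).sub (hc.mul hE)
    convert this using 1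
    case e'_4 => rfl
    case e'_8 => rfl
    ring
  -- G3 is o(h)
  have step3 : (fun h : ℝ => -((h : ℂ) / 3) * (w3 (y + h) - w3 (y - h)))
      =o[nhdsWithin 0 (Set.Ioi 0)] (fun h : ℝ => h ^ 1) := by
    have hA : (fun h : ℝ => -((h : ℂ) / 3)) =O[nhdsWithin 0 (Set.Ioi 0)] (fun h : ℝ => h) := by
      rw [Asymptotics.isBigO_iff]
      refine ⟨1, Eventually.of_forall fun h => ?_⟩
      simp only [norm_neg, norm_div, Complex.norm_real, Real.norm_eq_abs, one_mul]
      rw [show ‖(3:ℂ)‖ = 3 by norm_num]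
      exact div_le_self (abs_nonneg h) (by norm_num)
    have hB : (fun h : ℝ => w3 (y + h) - w3 (y - h))
        =o[nhdsWithin 0 (Set.Ioi 0)] (fun _ : ℝ => (1 : ℝ)) := by
      rw [Asymptotics.isLittleO_one_iff]
      have : Tendsto (fun h : ℝ => w3 (y + h) - w3 (y - h)) (nhds 0)
          (nhds (w3 (y + 0) - w3 (y - 0))) :=
        ((hw3c.comp (continuous_const.add continuous_id)).sub
          (hw3c.comp (continuous_const.sub continuous_id))).tendsto 0
      simpa using this.mono_left nhdsWithin_le_nhds
    simpa using hA.mul_isLittleO hB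
  have step2 := step_littleO hG3 (by simp) step3
  have step1 := step_littleO hG2 (by simp; ring) step2
  have step0 := step_littleO hG1 (by simp) step1
  exact step0


open Asymptotics Set in
/-- Truncation error of the discrete divergence on a divergence-free mode:
`i k·Mu + D₀v = O(h⁴)`. -/
theorem stmt_6 (k : ℤ) (y : ℝ) (u v : ℝ → ℂ)
    (hu : ContDiff ℝ 4 u) (hv : ContDiff ℝ 4 v)
    (hdiv : ∀ t : ℝ, Complex.I * (k : ℂ) * u t + deriv v t = 0) :
    Tendsto
      (fun h : ℝ =>
        (Complex.I * (k : ℂ) * (u (y - h) / 6 + 2 * u y / 3 + u (y + h) / 6)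
          + (v (y + h) - v (y - h)) / (2 * (h : ℂ))) / (h : ℂ) ^ 3)
      (nhdsWithin 0 (Set.Ioi 0)) (nhds 0) := by
  set w := deriv v with hwdef
  set w1 := deriv w with hw1def
  set w2 := deriv w1 with hw2def
  set w3 := deriv w2 with hw3def
  have hv4 : ContDiff ℝ ((3 : WithTop ℕ∞) + 1) v := by norm_num; exact hv
  have hwc : ContDiff ℝ ((2 : WithTop ℕ∞) + 1) w := by
    have := (contDiff_succ_iff_deriv.mp hv4).2.2
    norm_num at this ⊢; exact this
  have hw1c : ContDiff ℝ ((1 : WithTop ℕ∞) + 1) w1 := by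
    have := (contDiff_succ_iff_deriv.mp hwc).2.2
    norm_num at this ⊢; exact this
  have hw2c : ContDiff ℝ ((0 : WithTop ℕ∞) + 1) w2 := by
    have := (contDiff_succ_iff_deriv.mp hw1c).2.2
    norm_num at this ⊢; exact this
  have hw3cont : Continuous w3 := by
    have := (contDiff_succ_iff_deriv.mp hw2c).2.2
    exact this.continuous
  have hvD : ∀ t, HasDerivAt v (w t) t := fun t =>
    ((hv4.differentiable (by norm_num)) t).hasDerivAt
  have hwD : ∀ t, HasDerivAt w (w1 t) t := fun t =>
    ((hwc.differentiable (by norm_num)) t).hasDerivAt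
  have hw1D : ∀ t, HasDerivAt w1 (w2 t) t := fun t =>
    ((hw1c.differentiable (by norm_num)) t).hasDerivAt
  have hw2D : ∀ t, HasDerivAt w2 (w3 t) t := fun t =>
    ((hw2c.differentiable (by norm_num)) t).hasDerivAt
  have hG := main_littleO y v w w1 w2 w3 hvD hwD hw1D hw2D hw3cont
  have hBig : (fun h : ℝ => (h : ℝ) ^ 4) =O[nhdsWithin 0 (Set.Ioi 0)]
      (fun h : ℝ => (2 : ℂ) * (h : ℂ) ^ 4) := by
    rw [Asymptotics.isBigO_iff]
    refine ⟨1, Eventually.of_forall fun h => ?_⟩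
    simp only [norm_pow, norm_mul, Complex.norm_real, Real.norm_eq_abs, one_mul]
    rw [show ‖(2:ℂ)‖ = 2 by norm_num]
    nlinarith [pow_nonneg (abs_nonneg h) 4]
  have htend := (hG.trans_isBigO hBig).tendsto_div_nhds_zero
  refine Tendsto.congr' ?_ htend
  filter_upwards [self_mem_nhdsWithin] with h hh
  have hh0 : (0:ℝ) < h := hh
  have hne : (h : ℂ) ≠ 0 := by exact_mod_cast ne_of_gt hh0
  have e1 := hdiv (y - h)
  have e2 := hdiv y
  have e3 := hdiv (y + h)
  have hsub : Complex.I * (k : ℂ) * (u (y - h) / 6 + 2 * u y / 3 + u (y + h) / 6)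
      = -(w (y - h) / 6 + 2 * w y / 3 + w (y + h) / 6) := by
    linear_combination e1 / 6 + (2 / 3 : ℂ) * e2 + e3 / 6
  rw [hsub]
  field_simp
  ring
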